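/- Let F be a str-monotone function on bitableaux and k an integer; then the ideal I_k(F) of K[X] generated by all bitableaux Δ with F(Δ) ≥ k equals the K-vector space spanned by such bitableaux, and the standard bitableaux Σ with F(Σ) ≥ k form a K-basis of I_k(F). -/

import Mathlib

open MvPolynomial

/-- A row of a bitableau: a list of row indices and a list of column indices
(of equal length, strictly increasing), representing a minor of `X`. -/
abbrev Brow (m n : ℕ) := List (Fin m) × List (Fin n)

/-- A bitableau: a list of rows (i.e. a product of minors). -/
abbrev Bitab (m n : ℕ) := List (Brow m n)

/-- A row represents an honest (nonempty) minor. -/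
def validRow {m n : ℕ} (p : Brow m n) : Prop :=
  p.1.length = p.2.length ∧ p.1.Chain' (· < ·) ∧ p.2.Chain' (· < ·) ∧ p.1 ≠ []

/-- A valid bitableau: all rows are minors, of weakly decreasing sizes. -/
def validB {m n : ℕ} (Δ : Bitab m n) : Prop :=
  (∀ p ∈ Δ, validRow p) ∧ (Δ.map (fun p => p.1.length)).Chain' (· ≥ ·)

/-- The straightening partial order on minors:
`δ ⪯ ε` iff `|ε| ≤ |δ|` and the indices of `δ` are entrywise `≤` those of `ε`. -/
def precRow {m n : ℕ} (p q : Brow m n) : Prop :=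
  ∃ (h1 : q.1.length ≤ p.1.length) (h2 : q.2.length ≤ p.2.length),
    (∀ i : Fin q.1.length, p.1.get ⟨i, lt_of_lt_of_le i.isLt h1⟩ ≤ q.1.get i) ∧
    (∀ i : Fin q.2.length, p.2.get ⟨i, lt_of_lt_of_le i.isLt h2⟩ ≤ q.2.get i)

/-- A standard bitableau: valid, with `δ_1 ⪯ δ_2 ⪯ …`. -/
def isStd {m n : ℕ} (Δ : Bitab m n) : Prop :=
  validB Δ ∧ Δ.Chain' precRow

variable (K : Type*) [Field K]

/-- The minor of the generic matrix `X` given by a row of a bitableau. -/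
noncomputable def rowPoly {m n : ℕ} (p : Brow m n) : MvPolynomial (Fin m × Fin n) K :=
  if h : p.1.length = p.2.length then
    (Matrix.of fun i j : Fin p.1.length =>
      (X (p.1.get i, p.2.get (Fin.cast h j)) : MvPolynomial (Fin m × Fin n) K)).det
  else 0

/-- The product of minors represented by a bitableau. -/
noncomputable def bitabPoly {m n : ℕ} (Δ : Bitab m n) : MvPolynomial (Fin m × Fin n) K :=
  (Δ.map (rowPoly K)).prod

/-- The main-diagonal monomial of a minor. -/
noncomputable def rowDiag {m n : ℕ} (p : Brow m n) : MvPolynomial (Fin m × Fin n) K :=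
  if h : p.1.length = p.2.length then
    ∏ i : Fin p.1.length, (X (p.1.get i, p.2.get (Fin.cast h i)) : MvPolynomial (Fin m × Fin n) K)
  else 0

/-- The initial monomial (w.r.t. a diagonal term order) of a bitableau:
the product of the diagonal monomials of its minors. -/
noncomputable def iniB {m n : ℕ} (Δ : Bitab m n) : MvPolynomial (Fin m × Fin n) K :=
  (Δ.map (rowDiag K)).prod

/-- `γ_t` of a bitableau: `Σ_i (|δ_i| − t + 1)_+`. -/
def gamB {m n : ℕ} (t : ℕ) (Δ : Bitab m n) : ℕ :=
  (Δ.map (fun p => p.1.length + 1 - t)).sum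

/-- `α_k` of a bitableau: the sum of the sizes of the first `k` minors. -/
def alB {m n : ℕ} (k : ℕ) (Δ : Bitab m n) : ℕ :=
  ((Δ.map (fun p => p.1.length)).take k).sum

/-- RSK pair insertion: insert the column index `b` into the right tableau by
bumping, recording the row index `a` in the left tableau at the final box. -/
def pIns {m n : ℕ} : Bitab m n → Fin m → Fin n → Bitab m n
  | [], a, b => [([a], [b])]
  | (s, r) :: rest, a, b =>
    match r.findIdx? (fun z => decide (b < z)) with
    | none => (s ++ [a], r ++ [b]) :: rest
    | some i => (s, r.set i b) :: pIns rest a (r.getD i b)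

/-- The two-row array of a monomial exponent: its variables (with multiplicity)
ordered with non-decreasing row indices and, within equal row indices,
non-increasing column indices. -/
noncomputable def monPairs {m n : ℕ} (d : (Fin m × Fin n) →₀ ℕ) : List (Fin m × Fin n) :=
  d.toMultiset.toList.mergeSort
    (fun p q => decide (p.1 < q.1 ∨ (p.1 = q.1 ∧ q.2 ≤ p.2)))

/-- The inverse KRS map: the standard bitableau obtained from a monomial by RSK
insertion of its two-row array. -/
noncomputable def krsInv {m n : ℕ} (d : (Fin m × Fin n) →₀ ℕ) : Bitab m n :=
  (monPairs d).foldl (fun T p => pIns T p.1 p.2) []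

open scoped Classical in
/-- The KRS image of a standard bitableau: the unique monomial mapping to it
under the inverse KRS map (junk value `0` otherwise). -/
noncomputable def krsMon {m n : ℕ} (Δ : Bitab m n) : MvPolynomial (Fin m × Fin n) K :=
  if h : ∃ d : (Fin m × Fin n) →₀ ℕ, krsInv d = Δ then monomial h.choose (1 : K) else 0

/-- The image `KRS(I)` of an ideal with a standard basis: the `K`-span of the
KRS images of the standard bitableaux contained in `I`. -/
noncomputable def krsIdeal {m n : ℕ} (I : Ideal (MvPolynomial (Fin m × Fin n) K)) :
    Submodule K (MvPolynomial (Fin m × Fin n) K) :=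
  Submodule.span K {g | ∃ Δ : Bitab m n, isStd Δ ∧ bitabPoly K Δ ∈ I ∧ g = krsMon K Δ}

/-- `I` has a standard basis: it is spanned over `K` by the standard bitableaux
it contains. -/
def hasStdBasis {m n : ℕ} (I : Ideal (MvPolynomial (Fin m × Fin n) K)) : Prop :=
  (I : Set (MvPolynomial (Fin m × Fin n) K)) =
    ↑(Submodule.span K {f | ∃ Δ : Bitab m n, isStd Δ ∧ bitabPoly K Δ = f ∧ f ∈ I})

/-- The leading exponent of a polynomial w.r.t. a monomial order. -/
noncomputable def ordDeg {σ : Type*} (ord : MonomialOrder σ)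
    (f : MvPolynomial σ K) : σ →₀ ℕ :=
  ord.toSyn.symm (f.support.sup (fun d => ord.toSyn d))

/-- The initial ideal of an ideal w.r.t. a monomial order. -/
noncomputable def iniIdeal {σ : Type*} (ord : MonomialOrder σ)
    (J : Ideal (MvPolynomial σ K)) : Ideal (MvPolynomial σ K) :=
  Ideal.span {g | ∃ f ∈ J, f ≠ 0 ∧ g = monomial (ordDeg K ord f) (1 : K)}

/-- A monomial order on the variables of `X` is diagonal if the leading
monomial of every minor is its main-diagonal monomial. -/
def isDiagOrder {m n : ℕ} (ord : MonomialOrder (Fin m × Fin n)) : Prop :=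
  ∀ p : Brow m n, validRow p →
    (monomial (ordDeg K ord (rowPoly K p)) (1 : K)) = rowDiag K p

/-- Straightening (the standard bitableaux form a `K`-basis, hypothesis `B`):
if `F` is a str-monotone function on bitableaux and `k` an integer, then the
ideal `I_k(F)` generated by the bitableaux `Δ` with `F(Δ) ≥ k` equals the
`K`-span of these bitableaux, and the standard bitableaux `Σ` with `F(Σ) ≥ k`
form a `K`-basis of `I_k(F)`. -/
theorem Ik_str_monotone (m n : ℕ)
    (B : Module.Basis {Δ : Bitab m n // isStd Δ} K (MvPolynomial (Fin m × Fin n) K))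
    (hB : ∀ T, B T = bitabPoly K T.val)
    (F : Bitab m n → ℕ)
    (hmin : ∀ Δ : Bitab m n, validB Δ →
      ∃ T ∈ (B.repr (bitabPoly K Δ)).support, F T.val = F Δ)
    (hmono : ∀ (x : MvPolynomial (Fin m × Fin n) K) (Δ : Bitab m n), validB Δ →
      ∀ T ∈ (B.repr (x * bitabPoly K Δ)).support, F Δ ≤ F T.val)
    (k : ℕ) :
    ((Ideal.span {f | ∃ Δ : Bitab m n, validB Δ ∧ k ≤ F Δ ∧ f = bitabPoly K Δ} :
        Ideal (MvPolynomial (Fin m × Fin n) K)) : Set (MvPolynomial (Fin m × Fin n) K)) =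
      ↑(Submodule.span K
        {f | ∃ Δ : Bitab m n, validB Δ ∧ k ≤ F Δ ∧ f = bitabPoly K Δ}) ∧
    ((Ideal.span {f | ∃ Δ : Bitab m n, validB Δ ∧ k ≤ F Δ ∧ f = bitabPoly K Δ} :
        Ideal (MvPolynomial (Fin m × Fin n) K)) : Set (MvPolynomial (Fin m × Fin n) K)) =
      ↑(Submodule.span K
        {f | ∃ T : Bitab m n, isStd T ∧ k ≤ F T ∧ f = bitabPoly K T}) ∧
    LinearIndependent K
      (fun T : {T : Bitab m n // isStd T ∧ k ≤ F T} => bitabPoly K T.val) := by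
  classical
  set S : Set (MvPolynomial (Fin m × Fin n) K) :=
    {f | ∃ Δ : Bitab m n, validB Δ ∧ k ≤ F Δ ∧ f = bitabPoly K Δ} with hS
  set SStd : Set (MvPolynomial (Fin m × Fin n) K) :=
    {f | ∃ T : Bitab m n, isStd T ∧ k ≤ F T ∧ f = bitabPoly K T} with hSStd
  -- key lemma: if all basis components of f have F ≥ k, then f ∈ span K SStd
  have key : ∀ f : MvPolynomial (Fin m × Fin n) K,
      (∀ T ∈ (B.repr f).support, k ≤ F T.val) → f ∈ Submodule.span K SStd := by
    intro f hf
    have hsum : f = ∑ T ∈ (B.repr f).support, (B.repr f) T • bitabPoly K T.val := by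
      conv_lhs => rw [← B.linearCombination_repr f]
      rw [Finsupp.linearCombination_apply, Finsupp.sum]
      exact Finset.sum_congr rfl fun T _ => by rw [hB]
    rw [hsum]
    exact Submodule.sum_mem _ fun T hT => Submodule.smul_mem _ _
      (Submodule.subset_span ⟨T.val, T.prop, hf T hT, rfl⟩)
  have hsub : SStd ⊆ S := by
    rintro f ⟨T, hT, hk, rfl⟩
    exact ⟨T, hT.1, hk, rfl⟩
  -- span K SStd is closed under multiplication by arbitrary polynomials
  have mulmem : ∀ (a f : MvPolynomial (Fin m × Fin n) K),
      f ∈ Submodule.span K SStd → a * f ∈ Submodule.span K SStd := by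
    intro a f hf
    induction hf using Submodule.span_induction with
    | mem g hg =>
      obtain ⟨T, hT, hk, rfl⟩ := hg
      exact key _ fun T' hT' => le_trans hk (hmono a T hT.1 T' hT')
    | zero => simp
    | add g h _ _ ihg ihh => rw [mul_add]; exact Submodule.add_mem _ ihg ihh
    | smul c g _ ihg => rw [mul_smul_comm]; exact Submodule.smul_mem _ _ ihg
  -- S ⊆ span K SStd
  have hS_std : S ⊆ ↑(Submodule.span K SStd) := by
    rintro f ⟨Δ, hΔ, hk, rfl⟩
    exact key _ fun T hT => le_trans hk
      (hmono 1 Δ hΔ T (by simpa using hT))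
  -- Ideal.span S ⊆ span K SStd
  have hideal_std : (Ideal.span S : Set (MvPolynomial (Fin m × Fin n) K)) ⊆
      ↑(Submodule.span K SStd) := by
    intro f hf
    induction hf using Submodule.span_induction with
    | mem g hg => exact hS_std hg
    | zero => exact Submodule.zero_mem _
    | add g h _ _ ihg ihh => exact Submodule.add_mem _ ihg ihh
    | smul a g _ ihg => exact mulmem a g ihg
  -- span K SStd ⊆ span K S ⊆ Ideal.span S
  have hstd_S : Submodule.span K SStd ≤ Submodule.span K S :=
    Submodule.span_mono hsub
  have hS_ideal : (↑(Submodule.span K S) : Set (MvPolynomial (Fin m × Fin n) K)) ⊆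
      ↑(Ideal.span S) := by
    intro f hf
    refine Submodule.span_induction (fun g hg => Ideal.subset_span hg)
      (Submodule.zero_mem _) (fun g h _ _ ihg ihh => Submodule.add_mem _ ihg ihh)
      (fun c g _ ihg => ?_) hf
    have := Submodule.smul_mem (Ideal.span S) (C c) ihg
    rwa [smul_eq_mul, ← MvPolynomial.smul_eq_C_mul] at this
  refine ⟨?_, ?_, ?_⟩
  · apply Set.Subset.antisymm
    · exact fun f hf => hstd_S (hideal_std hf)
    · exact hS_ideal
  · apply Set.Subset.antisymm
    · exact hideal_std
    · exact fun f hf => hS_ideal (hstd_S hf)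
  · have heq : (fun T : {T : Bitab m n // isStd T ∧ k ≤ F T} => bitabPoly K T.val) =
        B ∘ (fun T : {T : Bitab m n // isStd T ∧ k ≤ F T} => (⟨T.val, T.prop.1⟩ :
          {Δ : Bitab m n // isStd Δ})) := funext fun T => (hB ⟨T.val, T.prop.1⟩).symm
    rw [heq]
    refine B.linearIndependent.comp _ fun a b h => ?_
    simp only [Subtype.mk.injEq] at h
    exact Subtype.ext h
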